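/- Let P and Q be probability distributions on a finite set Y and α ∈ [0,1]. Then the map α ↦ D(P ‖ αP + (1-α)Q) is non-increasing in α on [0,1]. -/
import Mathlib


open Finset

/-- KL divergence (base 2) between finitely supported distributions, valued in EReal,
with the conventions 0·log(0/a) = 0 and b·log(b/0) = ∞ for b ≠ 0. -/
noncomputable def klDivFin {Y : Type*} [Fintype Y] (P R : Y → ℝ) : EReal :=
  ∑ y, if P y = 0 then (0 : EReal)
    else if R y = 0 then (⊤ : EReal)
    else ((P y * Real.logb 2 (P y / R y) : ℝ) : EReal)

lemma ereal_sum_ne_bot {ι : Type*} {s : Finset ι} {f : ι → EReal}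
    (h1 : ∀ i ∈ s, f i ≠ ⊥) : ∑ i ∈ s, f i ≠ ⊥ := by
  classical
  induction s using Finset.induction_on with
  | empty => simp
  | @insert a t hnot ih =>
    rw [Finset.sum_insert hnot]
    intro hb
    rcases EReal.add_eq_bot_iff.1 hb with h | h
    · exact h1 a (Finset.mem_insert_self a t) h
    · exact ih (fun i hi => h1 i (Finset.mem_insert_of_mem hi)) h

lemma ereal_sum_eq_top {ι : Type*} {s : Finset ι} {f : ι → EReal}
    (h1 : ∀ i ∈ s, f i ≠ ⊥) {i0 : ι} (hi0 : i0 ∈ s) (h : f i0 = ⊤) :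
    ∑ i ∈ s, f i = ⊤ := by
  classical
  rw [← Finset.add_sum_erase s f hi0, h]
  exact EReal.top_add_of_ne_bot (ereal_sum_ne_bot fun i hi => h1 i (Finset.mem_of_mem_erase hi))

lemma ereal_coe_sum {ι : Type*} (s : Finset ι) (f : ι → ℝ) :
    ((∑ i ∈ s, f i : ℝ) : EReal) = ∑ i ∈ s, (f i : EReal) := by
  classical
  induction s using Finset.induction_on with
  | empty => simp
  | @insert a t hnot ih => rw [Finset.sum_insert hnot, Finset.sum_insert hnot, EReal.coe_add, ih]

/-- The key real-valued inequality. -/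
lemma real_key {Y : Type*} [Fintype Y] (P Q : Y → ℝ)
    (hP : ∀ y, 0 ≤ P y) (hPsum : ∑ y, P y = 1)
    (hQ : ∀ y, 0 ≤ Q y) (hQsum : ∑ y, Q y = 1)
    (α β : ℝ) (hα : 0 ≤ α) (hβ : β ≤ 1) (hαβ : α ≤ β)
    (hposα : ∀ y, P y ≠ 0 → 0 < α * P y + (1 - α) * Q y) :
    ∑ y, (if P y = 0 then 0 else P y * Real.logb 2 (P y / (β * P y + (1 - β) * Q y)))
      ≤ ∑ y, (if P y = 0 then 0 else P y * Real.logb 2 (P y / (α * P y + (1 - α) * Q y))) := by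
  classical
  have hα1 : α ≤ 1 := hαβ.trans hβ
  set Ra : Y → ℝ := fun y => α * P y + (1 - α) * Q y with hRa
  set Rb : Y → ℝ := fun y => β * P y + (1 - β) * Q y with hRb
  have hRbnn : ∀ y, 0 ≤ Rb y := fun y =>
    add_nonneg (mul_nonneg (hα.trans hαβ) (hP y)) (mul_nonneg (by linarith) (hQ y))
  have hRann : ∀ y, 0 ≤ Ra y := fun y =>
    add_nonneg (mul_nonneg hα (hP y)) (mul_nonneg (by linarith) (hQ y))
  have hposβ : ∀ y, P y ≠ 0 → 0 < Rb y := by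
    intro y hy
    rcases lt_or_eq_of_le (hα.trans hαβ) with hb | hb
    · have hPy : 0 < P y := lt_of_le_of_ne (hP y) (Ne.symm hy)
      have : 0 < β * P y := mul_pos hb hPy
      have : 0 ≤ (1 - β) * Q y := mul_nonneg (by linarith) (hQ y)
      simp only [hRb]; linarith
    · have hαβ0 : α = 0 ∧ β = 0 := by constructor <;> linarith
      have := hposα y hy
      simp only [hRa, hαβ0.1] at this
      simp only [hRb, hαβ0.2]
      linarith
  have hRbsum : ∑ y, Rb y = 1 := by
    simp only [hRb, Finset.sum_add_distrib, ← Finset.mul_sum, hPsum, hQsum]; ring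
  have hRasum : ∑ y, Ra y = 1 := by
    simp only [hRa, Finset.sum_add_distrib, ← Finset.mul_sum, hPsum, hQsum]; ring
  -- Key: ∑ over support of P * Ra / Rb ≤ 1
  have hK : ∑ y, (if P y = 0 then 0 else P y * Ra y / Rb y) ≤ 1 := by
    rcases eq_or_lt_of_le hβ with hb1 | hb1
    · -- β = 1 : Rb = P on all y
      have hRbP : ∀ y, Rb y = P y := by intro y; simp [hRb, hb1]
      calc ∑ y, (if P y = 0 then 0 else P y * Ra y / Rb y)
          ≤ ∑ y, Ra y := by
            apply Finset.sum_le_sum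
            intro y _
            by_cases hy : P y = 0
            · simp [hy, hRann y]
            · rw [if_neg hy, hRbP y, mul_comm, mul_div_assoc, div_self hy, mul_one]
        _ = 1 := hRasum
    · -- β < 1
      set c : ℝ := (β - α) / (1 - β) with hc
      have hcnn : 0 ≤ c := div_nonneg (by linarith) (by linarith)
      have hid : ∀ y, Ra y = (1 + c) * Rb y - c * P y := by
        intro y
        have h1b : (1:ℝ) - β ≠ 0 := by linarith
        simp only [hRa, hRb, hc]
        field_simp
        ring
      have step : ∀ y, (if P y = 0 then 0 else P y * Ra y / Rb y)
          ≤ (1 - c) * P y + c * Rb y := by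
        intro y
        by_cases hy : P y = 0
        · simp only [if_pos hy, hy, mul_zero, zero_add]
          exact mul_nonneg hcnn (hRbnn y)
        · rw [if_neg hy, hid y]
          have hr : 0 < Rb y := hposβ y hy
          rw [div_le_iff₀ hr]
          nlinarith [sq_nonneg (P y - Rb y), hP y]
      calc ∑ y, (if P y = 0 then 0 else P y * Ra y / Rb y)
          ≤ ∑ y, ((1 - c) * P y + c * Rb y) := Finset.sum_le_sum fun y _ => step y
        _ = 1 := by
            rw [Finset.sum_add_distrib, ← Finset.mul_sum, ← Finset.mul_sum, hPsum, hRbsum]; ring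
  -- ∑ g ≥ 0 where g y = P y * (1 - Ra y / Rb y) on support
  have hg : 0 ≤ ∑ y, (if P y = 0 then 0 else P y * (1 - Ra y / Rb y)) := by
    have : ∑ y, (if P y = 0 then 0 else P y * (1 - Ra y / Rb y))
        = ∑ y, P y - ∑ y, (if P y = 0 then 0 else P y * Ra y / Rb y) := by
      rw [← Finset.sum_sub_distrib]
      apply Finset.sum_congr rfl
      intro y _
      by_cases hy : P y = 0 <;> simp [hy] <;> ring
    rw [this, hPsum]
    linarith
  -- termwise comparison
  rw [← sub_nonneg, ← Finset.sum_sub_distrib]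
  have hlog2 : (0:ℝ) < Real.log 2 := Real.log_pos (by norm_num)
  calc (0:ℝ) ≤ (∑ y, (if P y = 0 then 0 else P y * (1 - Ra y / Rb y))) / Real.log 2 :=
        div_nonneg hg hlog2.le
    _ = ∑ y, (if P y = 0 then 0 else P y * (1 - Ra y / Rb y)) / Real.log 2 :=
        Finset.sum_div _ _ _
    _ ≤ _ := by
        apply Finset.sum_le_sum
        intro y _
        by_cases hy : P y = 0
        · simp [hy]
        · rw [if_neg hy, if_neg hy, if_neg hy]
          have hPy : 0 < P y := lt_of_le_of_ne (hP y) (Ne.symm hy)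
          have hra : 0 < Ra y := hposα y hy
          have hrb : 0 < Rb y := hposβ y hy
          have hlog : Real.log (Ra y / Rb y) ≤ Ra y / Rb y - 1 :=
            Real.log_le_sub_one_of_pos (div_pos hra hrb)
          rw [Real.log_div hra.ne' hrb.ne'] at hlog
          have hlogb : ∀ R : ℝ, 0 < R →
              P y * Real.logb 2 (P y / R) = P y * (Real.log (P y) - Real.log R) / Real.log 2 := by
            intro R hR
            rw [Real.logb, Real.log_div hPy.ne' hR.ne']
            ring
          rw [hlogb _ hra, hlogb _ hrb]
          rw [div_sub_div_same, div_le_div_iff₀ hlog2 hlog2]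
          have h1 : 1 - Ra y / Rb y ≤ Real.log (Rb y) - Real.log (Ra y) := by linarith
          have h2 : P y * (1 - Ra y / Rb y) ≤ P y * (Real.log (Rb y) - Real.log (Ra y)) :=
            mul_le_mul_of_nonneg_left h1 (hP y)
          nlinarith [hlog2]
  
/-- D(P ‖ αP + (1-α)Q) is non-increasing in α on [0,1]. -/
theorem klDiv_mixture_antitone
    {Y : Type*} [Fintype Y] (P Q : Y → ℝ)
    (hP : ∀ y, 0 ≤ P y) (hPsum : ∑ y, P y = 1)
    (hQ : ∀ y, 0 ≤ Q y) (hQsum : ∑ y, Q y = 1)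
    (α β : ℝ) (hα : 0 ≤ α) (hβ : β ≤ 1) (hαβ : α ≤ β) :
    klDivFin P (fun y => β * P y + (1 - β) * Q y)
      ≤ klDivFin P (fun y => α * P y + (1 - α) * Q y) := by
  classical
  have hα1 : α ≤ 1 := hαβ.trans hβ
  by_cases hA : ∃ y, P y ≠ 0 ∧ α * P y + (1 - α) * Q y = 0
  · obtain ⟨y0, hy0, hR0⟩ := hA
    have htop : klDivFin P (fun y => α * P y + (1 - α) * Q y) = ⊤ := by
      apply ereal_sum_eq_top (i0 := y0)
      · intro y _
        by_cases h1 : P y = 0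
        · simp [h1]
        · by_cases h2 : α * P y + (1 - α) * Q y = 0
          · simp [h1, h2]
          · simp only [if_neg h1, if_neg h2]
            exact EReal.coe_ne_bot _
      · exact Finset.mem_univ y0
      · simp [hy0, hR0]
    rw [htop]
    exact le_top
  · push_neg at hA
    have hposα : ∀ y, P y ≠ 0 → 0 < α * P y + (1 - α) * Q y := by
      intro y hy
      exact lt_of_le_of_ne
        (add_nonneg (mul_nonneg hα (hP y)) (mul_nonneg (by linarith) (hQ y)))
        (Ne.symm (hA y hy))
    have hposβ : ∀ y, P y ≠ 0 → 0 < β * P y + (1 - β) * Q y := by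
      intro y hy
      rcases lt_or_eq_of_le (hα.trans hαβ) with hb | hb
      · have hPy : 0 < P y := lt_of_le_of_ne (hP y) (Ne.symm hy)
        have h1 : 0 < β * P y := mul_pos hb hPy
        have h2 : 0 ≤ (1 - β) * Q y := mul_nonneg (by linarith) (hQ y)
        linarith
      · have hα0 : α = 0 := by linarith
        have hβ0 : β = 0 := by linarith
        have := hposα y hy
        rw [hα0] at this
        rw [hβ0]
        linarith
    have hcoe : ∀ (R : Y → ℝ), (∀ y, P y ≠ 0 → 0 < R y) →
        klDivFin P R = ((∑ y, if P y = 0 then 0 else P y * Real.logb 2 (P y / R y) : ℝ) : EReal) := by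
      intro R hR
      rw [klDivFin, ereal_coe_sum]
      apply Finset.sum_congr rfl
      intro y _
      by_cases h1 : P y = 0
      · simp [h1]
      · rw [if_neg h1, if_neg h1, if_neg (hR y h1).ne']
    rw [hcoe _ hposβ, hcoe _ hposα, EReal.coe_le_coe_iff]
    exact real_key P Q hP hPsum hQ hQsum α β hα hβ hαβ hposα
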